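/- Let n ≥ 1 and let c > 0 be real. Then det( D_n⁺ (c · M_n) D_n⁺ᵀ ) = 2^{n−1} (n+2) c^{n(n+1)/2}. -/

import Mathlib

open Matrix

/-- Column-stacking `vec` of a square matrix, indexed by pairs `(i, j)` with
`(vec T) (i, j) = T i j`. -/
def vecM {n : ℕ} (T : Matrix (Fin n) (Fin n) ℝ) : Fin n × Fin n → ℝ :=
  fun p => T p.1 p.2

/-- The commutation matrix `C_n`, satisfying `C_n (vec T) = vec Tᵀ`. -/
def commMat (n : ℕ) : Matrix (Fin n × Fin n) (Fin n × Fin n) ℝ :=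
  Matrix.of fun p q => if p.1 = q.2 ∧ p.2 = q.1 then 1 else 0

/-- The matrix `M_n = I_{n²} + C_n + (vec I_n)(vec I_n)ᵀ`. -/
def Mmat (n : ℕ) : Matrix (Fin n × Fin n) (Fin n × Fin n) ℝ :=
  1 + commMat n + Matrix.vecMulVec (vecM (1 : Matrix (Fin n) (Fin n) ℝ))
    (vecM (1 : Matrix (Fin n) (Fin n) ℝ))


/-- Index set for the half-vectorization: pairs `(i, j)` with `i ≥ j`. -/
abbrev SymIdx (n : ℕ) := {p : Fin n × Fin n // p.2 ≤ p.1}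

/-- Half-vectorization `vech`: the entries `S i j` with `i ≥ j`. -/
def vechM {n : ℕ} (S : Matrix (Fin n) (Fin n) ℝ) : SymIdx n → ℝ :=
  fun q => S q.1.1 q.1.2

/-- The duplication matrix `D_n`, satisfying `D_n (vech S) = vec S` for every
symmetric `S`. -/
def dupMat (n : ℕ) : Matrix (Fin n × Fin n) (SymIdx n) ℝ :=
  Matrix.of fun p q => if p = q.1 ∨ p = (q.1.2, q.1.1) then 1 else 0

/-- The Moore–Penrose inverse `D_n⁺ = (D_nᵀ D_n)⁻¹ D_nᵀ` of the duplication
matrix. -/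
noncomputable def dupPinv (n : ℕ) : Matrix (SymIdx n) (Fin n × Fin n) ℝ :=
  ((dupMat n)ᵀ * dupMat n)⁻¹ * (dupMat n)ᵀ

/-! ### Auxiliary definitions -/

/-- The diagonal of `D_nᵀ D_n`. -/
def dvec (n : ℕ) : SymIdx n → ℝ := fun q => if q.1.1 = q.1.2 then 1 else 2

/-- `vech I_n`. -/
def uvec (n : ℕ) : SymIdx n → ℝ := fun q => if q.1.1 = q.1.2 then 1 else 0

/-- The diagonal entries of the diagonal part of `Σ/c`. -/
def evec (n : ℕ) : SymIdx n → ℝ := fun q => if q.1.1 = q.1.2 then 2 else 1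

lemma symidx_eq {n : ℕ} {q r : SymIdx n} (h : q.1 = (r.1.2, r.1.1)) :
    q = r ∧ r.1.1 = r.1.2 := by
  have h1 : q.1.1 = r.1.2 := by rw [h]
  have h2 : q.1.2 = r.1.1 := by rw [h]
  have hq : q.1.2 ≤ q.1.1 := q.2
  have hr : r.1.2 ≤ r.1.1 := r.2
  have heq : r.1.1 = r.1.2 := by
    refine le_antisymm ?_ hr
    rw [← h2, ← h1]; exact hq
  refine ⟨Subtype.ext ?_, heq⟩
  have : q.1.1 = r.1.1 := h1.trans heq.symm
  have h2' : q.1.2 = r.1.2 := h2.trans heq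
  exact Prod.ext this h2'

lemma symidx_diag_swap {n : ℕ} {q : SymIdx n} (hd : q.1.1 = q.1.2) :
    (q.1.2, q.1.1) = q.1 :=
  Prod.ext hd.symm hd

lemma symidx_offdiag_swap {n : ℕ} {q : SymIdx n} (hd : ¬ q.1.1 = q.1.2) :
    q.1 ≠ (q.1.2, q.1.1) := by
  intro h
  rw [Prod.ext_iff] at h
  exact hd h.1

lemma pair_self {α : Type*} [DecidableEq α] (a : α) : ({a, a} : Finset α) = {a} :=
  Finset.insert_eq_self.2 (Finset.mem_singleton_self a)

lemma sum_dup_mul {n : ℕ} (q : SymIdx n) (g : Fin n × Fin n → ℝ) :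
    (∑ p, dupMat n p q * g p) =
      ∑ p ∈ ({q.1, (q.1.2, q.1.1)} : Finset (Fin n × Fin n)), g p := by
  have h : ∀ p, dupMat n p q * g p
      = if p = q.1 ∨ p = (q.1.2, q.1.1) then g p else 0 := by
    intro p
    simp only [dupMat, of_apply]
    split <;> simp
  simp_rw [h]
  rw [← Finset.sum_filter]
  congr 1
  ext p
  simp

lemma dup_self {n : ℕ} (q : SymIdx n) : dupMat n q.1 q = 1 := by
  simp [dupMat]

lemma dup_ne {n : ℕ} {q r : SymIdx n} (h : q ≠ r) : dupMat n q.1 r = 0 := by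
  simp only [dupMat, of_apply, ite_eq_right_iff]
  intro hor
  rcases hor with h1 | h2
  · exact absurd (Subtype.ext h1) h
  · exact absurd (symidx_eq h2).1 h

lemma DtD (n : ℕ) : (dupMat n)ᵀ * dupMat n = diagonal (dvec n) := by
  ext q r
  rw [mul_apply]
  simp only [transpose_apply]
  rw [sum_dup_mul q (fun p => dupMat n p r)]
  by_cases hd : q.1.1 = q.1.2
  · rw [symidx_diag_swap hd, pair_self, Finset.sum_singleton]
    by_cases hqr : q = r
    · subst hqr
      rw [dup_self, diagonal_apply_eq]
      simp [dvec, hd]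
    · rw [dup_ne hqr, diagonal_apply_ne _ hqr]
  · rw [Finset.sum_pair (symidx_offdiag_swap hd)]
    by_cases hqr : q = r
    · subst hqr
      rw [dup_self]
      have h2 : dupMat n (q.1.2, q.1.1) q = 1 := by
        simp [dupMat]
      rw [h2, diagonal_apply_eq]
      simp only [dvec, if_neg hd]
      norm_num
    · have h1 : dupMat n q.1 r = 0 := dup_ne hqr
      have h2 : dupMat n (q.1.2, q.1.1) r = 0 := by
        simp only [dupMat, of_apply, ite_eq_right_iff]
        intro hor
        rcases hor with h3 | h4
        · exact absurd (symidx_eq h3.symm).1.symm hqr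
        · rw [Prod.ext_iff] at h4
          have : q.1 = r.1 := Prod.ext h4.2 h4.1
          exact absurd (Subtype.ext this) hqr
      rw [h1, h2, diagonal_apply_ne _ hqr]
      norm_num

lemma dup_swap {n : ℕ} (p : Fin n × Fin n) (q : SymIdx n) :
    dupMat n (p.2, p.1) q = dupMat n p q := by
  simp only [dupMat, of_apply]
  congr 1
  simp only [Prod.ext_iff, eq_iff_iff]
  constructor <;> (rintro (⟨h1, h2⟩ | ⟨h1, h2⟩)) <;> simp_all

lemma CD (n : ℕ) : commMat n * dupMat n = dupMat n := by
  ext p q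
  rw [mul_apply]
  have h : ∀ p', commMat n p p' * dupMat n p' q
      = if p' = (p.2, p.1) then dupMat n p' q else 0 := by
    intro p'
    simp only [commMat, of_apply]
    by_cases h : p' = (p.2, p.1)
    · subst h; simp
    · have : ¬(p.1 = p'.2 ∧ p.2 = p'.1) := by
        intro hc
        exact h (Prod.ext hc.2.symm hc.1.symm)
      simp [this, h]
  simp_rw [h]
  rw [Finset.sum_ite_eq' Finset.univ ((p.2, p.1)) (fun p' => dupMat n p' q)]
  simp [dup_swap]

lemma sum_dup_v {n : ℕ} (q : SymIdx n) :
    (∑ p, dupMat n p q * vecM (1 : Matrix (Fin n) (Fin n) ℝ) p) = uvec n q := by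
  rw [sum_dup_mul q (fun p => vecM (1 : Matrix (Fin n) (Fin n) ℝ) p)]
  by_cases hd : q.1.1 = q.1.2
  · rw [symidx_diag_swap hd, pair_self, Finset.sum_singleton]
    simp [vecM, one_apply, uvec, hd]
  · rw [Finset.sum_pair (symidx_offdiag_swap hd)]
    simp [vecM, one_apply, uvec, hd, Ne.symm hd]

lemma DtVD (n : ℕ) :
    (dupMat n)ᵀ * vecMulVec (vecM (1 : Matrix (Fin n) (Fin n) ℝ))
        (vecM (1 : Matrix (Fin n) (Fin n) ℝ)) * dupMat n
      = vecMulVec (uvec n) (uvec n) := by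
  ext q r
  rw [mul_apply]
  have hDV : ∀ p', ((dupMat n)ᵀ * vecMulVec (vecM (1 : Matrix (Fin n) (Fin n) ℝ))
      (vecM (1 : Matrix (Fin n) (Fin n) ℝ))) q p'
        = uvec n q * vecM (1 : Matrix (Fin n) (Fin n) ℝ) p' := by
    intro p'
    rw [mul_apply]
    simp only [transpose_apply, vecMulVec_apply]
    simp_rw [← mul_assoc]
    rw [← Finset.sum_mul, sum_dup_v q]
  simp_rw [hDV, mul_assoc]
  rw [← Finset.mul_sum]
  have hr : (∑ p', vecM (1 : Matrix (Fin n) (Fin n) ℝ) p' * dupMat n p' r) = uvec n r := by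
    simp_rw [mul_comm]
    exact sum_dup_v r
  rw [hr, vecMulVec_apply]

lemma DtMD (n : ℕ) : (dupMat n)ᵀ * Mmat n * dupMat n =
    diagonal (fun q => 2 * dvec n q) + vecMulVec (uvec n) (uvec n) := by
  rw [Mmat]
  rw [Matrix.mul_add, Matrix.mul_add, Matrix.add_mul, Matrix.add_mul,
    Matrix.mul_one]
  have h1 : (dupMat n)ᵀ * commMat n * dupMat n = diagonal (dvec n) := by
    rw [Matrix.mul_assoc, CD, DtD]
  have h2 : (fun q => dvec n q + dvec n q) = fun q => 2 * dvec n q := by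
    funext q; ring
  rw [DtD, h1, DtVD, diagonal_add, h2]

lemma dvec_ne_zero {n : ℕ} (q : SymIdx n) : dvec n q ≠ 0 := by
  simp only [dvec]; split <;> norm_num

lemma evec_ne_zero {n : ℕ} (q : SymIdx n) : evec n q ≠ 0 := by
  simp only [evec]; split <;> norm_num

lemma uvec_dinv {n : ℕ} (q : SymIdx n) : (dvec n q)⁻¹ * uvec n q = uvec n q := by
  simp only [dvec, uvec]; split <;> norm_num

lemma Sigma_eq (n : ℕ) (c : ℝ) :
    dupPinv n * (c • Mmat n) * (dupPinv n)ᵀ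
      = c • (diagonal (evec n) + vecMulVec (uvec n) (uvec n)) := by
  have hdinv : ((dupMat n)ᵀ * dupMat n)⁻¹ = diagonal (fun q => (dvec n q)⁻¹) := by
    rw [DtD]
    apply Matrix.inv_eq_right_inv
    rw [diagonal_mul_diagonal]
    have h : (fun q => dvec n q * (dvec n q)⁻¹) = fun _ : SymIdx n => (1 : ℝ) := by
      funext q; exact mul_inv_cancel₀ (dvec_ne_zero q)
    rw [h, diagonal_one]
  have hP : dupPinv n = diagonal (fun q => (dvec n q)⁻¹) * (dupMat n)ᵀ := by
    rw [dupPinv, hdinv]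
  rw [hP, Matrix.transpose_mul, Matrix.transpose_transpose, Matrix.diagonal_transpose]
  rw [Matrix.mul_smul, Matrix.smul_mul]
  congr 1
  have hassoc : diagonal (fun q => (dvec n q)⁻¹) * (dupMat n)ᵀ * Mmat n *
        (dupMat n * diagonal fun q => (dvec n q)⁻¹)
      = diagonal (fun q => (dvec n q)⁻¹) * ((dupMat n)ᵀ * Mmat n * dupMat n) *
        diagonal (fun q => (dvec n q)⁻¹) := by
    simp only [Matrix.mul_assoc]
  rw [hassoc, DtMD, Matrix.mul_add, Matrix.add_mul]
  congr 1
  · ext q r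
    simp only [mul_diagonal, diagonal_mul]
    by_cases h : q = r
    · subst h
      rw [diagonal_apply_eq, diagonal_apply_eq]
      simp only [dvec, evec]
      split <;> norm_num
    · rw [diagonal_apply_ne _ h, diagonal_apply_ne _ h]
      ring
  · ext q r
    simp only [mul_diagonal, diagonal_mul, vecMulVec_apply]
    have hq := uvec_dinv q
    have hr := uvec_dinv r
    calc (dvec n q)⁻¹ * (uvec n q * uvec n r) * (dvec n r)⁻¹
        = ((dvec n q)⁻¹ * uvec n q) * ((dvec n r)⁻¹ * uvec n r) := by ring
      _ = uvec n q * uvec n r := by rw [hq, hr]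

/-- The diagonal positions, counted. -/
lemma card_diag (n : ℕ) :
    (Finset.univ.filter fun q : SymIdx n => q.1.1 = q.1.2).card = n := by
  rw [← Fintype.card_subtype]
  have e : {q : SymIdx n // q.1.1 = q.1.2} ≃ Fin n :=
    { toFun := fun q => q.1.1.1
      invFun := fun i => ⟨⟨(i, i), le_rfl⟩, rfl⟩
      left_inv := by
        rintro ⟨⟨⟨a, b⟩, hab⟩, hd⟩
        simp only at hd
        subst hd
        rfl
      right_inv := fun i => rfl }
  rw [Fintype.card_congr e, Fintype.card_fin]

lemma card_symidx (n : ℕ) : Fintype.card (SymIdx n) = n * (n + 1) / 2 := by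
  rw [Fintype.card_subtype, Finset.card_filter, Fintype.sum_prod_type]
  have hinner : ∀ i : Fin n, (∑ j : Fin n, if (i, j).2 ≤ (i, j).1 then 1 else 0)
      = (i : ℕ) + 1 := by
    intro i
    rw [← Finset.card_filter]
    have h : Finset.univ.filter (fun j : Fin n => (i, j).2 ≤ (i, j).1) = Finset.Iic i := by
      ext j; simp
    rw [h, Fin.card_Iic]
  simp_rw [hinner]
  rw [Fin.sum_univ_eq_sum_range (fun i => i + 1) n]
  have h2 : ∑ i ∈ Finset.range n, (i + 1) = ∑ i ∈ Finset.range (n + 1), i := by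
    rw [Finset.sum_range_succ' (fun i => i) n]; simp
  rw [h2, Finset.sum_range_id, Nat.add_sub_cancel, Nat.mul_comm]

lemma prod_evec (n : ℕ) : (∏ q : SymIdx n, evec n q) = 2 ^ n := by
  simp only [evec]
  rw [Finset.prod_ite, Finset.prod_const, Finset.prod_const, card_diag]
  simp

lemma sum_uvec (n : ℕ) :
    (∑ q : SymIdx n, (uvec n q * (evec n q)⁻¹) * uvec n q) = (n : ℝ) / 2 := by
  have h : ∀ q : SymIdx n, (uvec n q * (evec n q)⁻¹) * uvec n q
      = if q.1.1 = q.1.2 then (2 : ℝ)⁻¹ else 0 := by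
    intro q; simp only [uvec, evec]; split <;> norm_num
  simp_rw [h]
  rw [← Finset.sum_filter, Finset.sum_const, card_diag, nsmul_eq_mul]
  rw [div_eq_mul_inv]

theorem det_Sigma (n : ℕ) (hn : 1 ≤ n) (c : ℝ) (hc : 0 < c) :
    (dupPinv n * (c • Mmat n) * (dupPinv n)ᵀ).det =
      2 ^ (n - 1) * ((n : ℝ) + 2) * c ^ (n * (n + 1) / 2) := by
  rw [Sigma_eq, Matrix.det_smul, card_symidx]
  have hdet : (diagonal (evec n) + vecMulVec (uvec n) (uvec n)).det
      = 2 ^ (n - 1) * ((n : ℝ) + 2) := by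
    rw [vecMulVec_eq Unit]
    have hUnit : IsUnit (diagonal (evec n)).det := by
      rw [det_diagonal]
      exact isUnit_iff_ne_zero.2 (Finset.prod_ne_zero_iff.2 fun q _ => evec_ne_zero q)
    rw [Matrix.det_add_replicateCol_mul_replicateRow hUnit]
    have hinv : (diagonal (evec n))⁻¹ = diagonal (fun q => (evec n q)⁻¹) := by
      apply Matrix.inv_eq_right_inv
      rw [diagonal_mul_diagonal]
      have h : (fun q => evec n q * (evec n q)⁻¹) = fun _ : SymIdx n => (1 : ℝ) := by
        funext q; exact mul_inv_cancel₀ (evec_ne_zero q)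
      rw [h, diagonal_one]
    rw [hinv]
    have h11 : (1 + replicateRow Unit (uvec n) * diagonal (fun q => (evec n q)⁻¹)
        * replicateCol Unit (uvec n)).det = 1 + (n : ℝ) / 2 := by
      rw [Matrix.det_unique, Matrix.add_apply, one_apply_eq, ← replicateRow_vecMul,
        replicateRow_mul_replicateCol_apply]
      congr 1
      rw [dotProduct]
      rw [← sum_uvec n]
      congr 1
      funext q
      rw [vecMul_diagonal]
    rw [h11, det_diagonal, prod_evec]
    have h2n : (2 : ℝ) ^ n = 2 ^ (n - 1) * 2 := by
      conv_lhs => rw [show n = (n - 1) + 1 from (Nat.succ_pred_eq_of_pos hn).symm]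
      rw [pow_succ]
    rw [h2n]
    field_simp
    ring
  rw [hdet]
  ring
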